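/- arXiv:0910.4789 — 4 statements merged into one kernel-verified Lean document; each statement's English description precedes it below -/
import Mathlib

section
/- Suppose the finite simplicial graph Γ contains no domination-equivalent pair of vertices and no separating intersection of links. Then every finite-index nilpotent subgroup of Out(A_Γ) has nilpotency class at least depth(Γ). -/
open SimpleGraph
open scoped commutatorElement

variable {V : Type*}

/-- The link of a vertex: the set of adjacent vertices. -/
def lk (G : SimpleGraph V) (x : V) : Set V := {z | G.Adj x z}

/-- The star of a vertex: the link together with the vertex itself. -/
def st (G : SimpleGraph V) (x : V) : Set V := insert x (lk G x)

/-- `Dominates G y x` means `y ≥ x`, i.e. `lk x ⊆ st y`. -/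
def Dominates (G : SimpleGraph V) (y x : V) : Prop := lk G x ⊆ st G y

/-- `Γ` contains a domination-equivalent pair of (distinct) vertices. -/
def DomEquivPair (G : SimpleGraph V) : Prop :=
  ∃ x y : V, x ≠ y ∧ Dominates G x y ∧ Dominates G y x

/-- `S` separates `u` from `v`: both lie outside `S` and they are not joined by a path
in the induced subgraph on the complement of `S`. -/
def SeparatesFrom (G : SimpleGraph V) (S : Set V) (u v : V) : Prop :=
  ∃ (hu : u ∈ Sᶜ) (hv : v ∈ Sᶜ),
    ¬ (G.induce Sᶜ).Reachable ⟨u, hu⟩ ⟨v, hv⟩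

/-- `Γ` has a separating intersection of links: there are distinct non-adjacent vertices
`x, y` and a vertex `z` whose connected component in the induced subgraph on the
complement of `lk x ∩ lk y` contains neither `x` nor `y`. -/
def SepIntLinks (G : SimpleGraph V) : Prop :=
  ∃ x y : V, x ≠ y ∧ ¬ G.Adj x y ∧ ∃ z : V,
    SeparatesFrom G (lk G x ∩ lk G y) z x ∧ SeparatesFrom G (lk G x ∩ lk G y) z y

/-- `Y` is the vertex set of a connected component of the induced subgraph on `S`. -/
def IsCompOf (G : SimpleGraph V) (S : Set V) (Y : Set V) : Prop :=
  Y.Nonempty ∧ Y ⊆ S ∧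
    ∀ a : S, a.1 ∈ Y → ∀ b : S, ((G.induce S).Reachable a b ↔ b.1 ∈ Y)

/-- The defining relators of the right-angled Artin group of `G`. -/
def raagRels (G : SimpleGraph V) : Set (FreeGroup V) :=
  {r | ∃ x y : V, G.Adj x y ∧ r = ⁅FreeGroup.of x, FreeGroup.of y⁆}

/-- The right-angled Artin group of a graph. -/
abbrev RAAG (G : SimpleGraph V) : Type _ := PresentedGroup (raagRels G)

/-- The generator of the RAAG corresponding to a vertex. -/
def gen (G : SimpleGraph V) (x : V) : RAAG G := PresentedGroup.of x

/-- The subgroup of inner automorphisms. -/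
def Inn (H : Type*) [Group H] : Subgroup (MulAut H) := (MulAut.conj : H →* MulAut H).range

instance Inn.normal (H : Type*) [Group H] : (Inn H).Normal := by
  constructor
  intro n hn g
  obtain ⟨h, rfl⟩ := hn
  refine ⟨g h, ?_⟩
  ext x
  simp [MulAut.conj]

/-- The outer automorphism group `Out(A_Γ)` of the RAAG of `G`. -/
abbrev OutG (G : SimpleGraph V) := MulAut (RAAG G) ⧸ Inn (RAAG G)

/-- A group contains a subgroup isomorphic to the free group of rank 2. -/
def HasFreeRankTwo (H : Type*) [Group H] : Prop :=
  ∃ K : Subgroup H, Nonempty (↥K ≃* FreeGroup (Fin 2))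

/-- A group is virtually nilpotent. -/
def VirtNilpotent (H : Type*) [Group H] : Prop :=
  ∃ K : Subgroup H, K.FiniteIndex ∧ Group.IsNilpotent ↥K

/-- `φ` is a transvection with multiplier `x^ε` acting on the generator `y`
(either a right or a left transvection). -/
def IsTransvection (G : SimpleGraph V) (φ : MulAut (RAAG G)) (x y : V) (ε : ℤ) : Prop :=
  x ≠ y ∧ Dominates G x y ∧ (ε = 1 ∨ ε = -1) ∧
  (φ (gen G y) = gen G y * (gen G x) ^ ε ∨ φ (gen G y) = (gen G x) ^ ε * gen G y) ∧
  ∀ z : V, z ≠ y → φ (gen G z) = gen G z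

/-- `φ` is a non-inner partial conjugation with multiplier `x^ε`, conjugating exactly the
generators in the connected component `Y` of the complement of `st x`. -/
def IsPartialConj (G : SimpleGraph V) (φ : MulAut (RAAG G)) (x : V) (ε : ℤ) (Y : Set V) : Prop :=
  (ε = 1 ∨ ε = -1) ∧ IsCompOf G ((st G x)ᶜ) Y ∧ ((st G x ∪ Y)ᶜ).Nonempty ∧
  (∀ y ∈ Y, φ (gen G y) = (gen G x) ^ (-ε) * gen G y * (gen G x) ^ ε) ∧
  ∀ z : V, z ∉ Y → φ (gen G z) = gen G z

/-- A domination chain, listed with the dominant member first. -/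
def IsDomChain (G : SimpleGraph V) (l : List V) : Prop :=
  l ≠ [] ∧ l.Nodup ∧ l.Chain' (fun a b => Dominates G a b)

/-- The domination depth of a vertex: the maximal length of a domination chain with
top member `x`. -/
noncomputable def domDepth (G : SimpleGraph V) (x : V) : ℕ :=
  sSup {n | ∃ l : List V, IsDomChain G l ∧ l.head? = some x ∧ l.length = n + 1}

/-- A star-separation preserving domination chain with top member `xm` and
bottom member `x1`. -/
def IsSSPChain (G : SimpleGraph V) (l : List V) (xm x1 : V) : Prop :=
  IsDomChain G l ∧ l.head? = some xm ∧ l.getLast? = some x1 ∧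
  ∃ Y1 Y2 : Set V, IsCompOf G ((st G x1)ᶜ) Y1 ∧ IsCompOf G ((st G x1)ᶜ) Y2 ∧
    Y1 ≠ Y2 ∧ ¬ Y1 ⊆ st G xm ∧ ¬ Y2 ⊆ st G xm

/-- The star-separation depth of a vertex: `1 +` the maximal length of a star-separation
preserving chain with top member `x` (this is `0` if there is no such chain, as then the
set below is empty). -/
noncomputable def ssDepth (G : SimpleGraph V) (x : V) : ℕ :=
  sSup {n | ∃ (l : List V) (x1 : V), IsSSPChain G l x x1 ∧ l.length = n}

/-- The depth of a vertex. -/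
noncomputable def vdepth (G : SimpleGraph V) (x : V) : ℕ := max (domDepth G x) (ssDepth G x)

/-- The depth of the graph `G`. -/
noncomputable def gdepth (G : SimpleGraph V) : ℕ := sSup {n | ∃ x : V, n = vdepth G x}

/-- The set of images in `Out(A_Γ)` of all transvections and all non-inner partial
conjugations. -/
def TvPcSet (G : SimpleGraph V) : Set (OutG G) :=
  {g | ∃ φ : MulAut (RAAG G), (QuotientGroup.mk φ : OutG G) = g ∧
    ((∃ x y ε, IsTransvection G φ x y ε) ∨ (∃ x ε Y, IsPartialConj G φ x ε Y))}

/-- The subgroup `N` of `Out(A_Γ)` generated by the images of all transvections and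
all non-inner partial conjugations. -/
def Ngrp (G : SimpleGraph V) : Subgroup (OutG G) := Subgroup.closure (TvPcSet G)

section RDAux

open Finsupp

variable {G : SimpleGraph V}

namespace RD

lemma adj_ne {x y : V} (h : G.Adj x y) : x ≠ y := G.ne_of_adj h

/-- Build a homomorphism out of the RAAG from edgewise-commuting images. -/
def mkHom {H : Type*} [Group H] (f : V → H)
    (hf : ∀ ⦃x y⦄, G.Adj x y → Commute (f x) (f y)) : RAAG G →* H :=
  PresentedGroup.toGroup (f := f) (by
    rintro r ⟨x, y, hxy, rfl⟩
    rw [map_commutatorElement, FreeGroup.lift_apply_of, FreeGroup.lift_apply_of]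
    exact commutatorElement_eq_one_iff_commute.2 (hf hxy))

@[simp] lemma mkHom_gen {H : Type*} [Group H] (f : V → H)
    (hf : ∀ ⦃x y⦄, G.Adj x y → Commute (f x) (f y)) (v : V) :
    mkHom f hf (gen G v) = f v := PresentedGroup.toGroup.of _

lemma gen_commute {x y : V} (h : G.Adj x y) : Commute (gen G x) (gen G y) := by
  rw [← commutatorElement_eq_one_iff_commute]
  have hmem : (⁅FreeGroup.of x, FreeGroup.of y⁆ : FreeGroup V)
      ∈ Subgroup.normalClosure (raagRels G) :=
    Subgroup.subset_normalClosure ⟨x, y, h, rfl⟩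
  have e : ⁅gen G x, gen G y⁆
      = ((QuotientGroup.mk' (Subgroup.normalClosure (raagRels G)))
          ⁅FreeGroup.of x, FreeGroup.of y⁆ : RAAG G) := by
        rw [map_commutatorElement]; rfl
  rw [e]; exact (QuotientGroup.eq_one_iff _).2 hmem

lemma homext {H : Type*} [Group H] {φ ψ : RAAG G →* H}
    (h : ∀ v, φ (gen G v) = ψ (gen G v)) : φ = ψ := PresentedGroup.ext h

/-- Build an automorphism of the RAAG from two inverse families of images. -/
def mkAut (f g : V → RAAG G)
    (hf : ∀ ⦃x y⦄, G.Adj x y → Commute (f x) (f y))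
    (hg : ∀ ⦃x y⦄, G.Adj x y → Commute (g x) (g y))
    (hfg : ∀ v, mkHom f hf (g v) = gen G v)
    (hgf : ∀ v, mkHom g hg (f v) = gen G v) : MulAut (RAAG G) :=
{ toFun := mkHom f hf
  invFun := mkHom g hg
  left_inv := fun w => by
    have h : (mkHom g hg).comp (mkHom f hf) = MonoidHom.id (RAAG G) :=
      homext (fun v => by simp [hgf])
    simpa using DFunLike.congr_fun h w
  right_inv := fun w => by
    have h : (mkHom f hf).comp (mkHom g hg) = MonoidHom.id (RAAG G) :=
      homext (fun v => by simp [hfg])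
    simpa using DFunLike.congr_fun h w
  map_mul' := map_mul _ }

@[simp] lemma mkAut_gen (f g : V → RAAG G) (hf hg hfg hgf) (v : V) :
    mkAut f g hf hg hfg hgf (gen G v) = f v := mkHom_gen f hf v

lemma fix_closure (φ : MulAut (RAAG G)) {S : Set (RAAG G)}
    (h : ∀ x ∈ S, φ x = x) : ∀ w ∈ Subgroup.closure S, φ w = w := fun w hw =>
  Subgroup.closure_induction (p := fun g _ => φ g = g) h (map_one φ)
    (fun x y _ _ hx hy => by show φ (x * y) = x * y; rw [map_mul, hx, hy])
    (fun x _ hx => by show φ x⁻¹ = x⁻¹; rw [map_inv, hx]) hw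

lemma maps_closure (φ : MulAut (RAAG G)) {X S : Set (RAAG G)}
    (h : ∀ x ∈ X, φ x ∈ Subgroup.closure S) :
    ∀ w ∈ Subgroup.closure X, φ w ∈ Subgroup.closure S := fun w hw =>
  Subgroup.closure_induction (p := fun g _ => φ g ∈ Subgroup.closure S) h
    (by show φ 1 ∈ _; rw [map_one]; exact one_mem _)
    (fun x y _ _ hx hy => by show φ (x * y) ∈ _; rw [map_mul]; exact mul_mem hx hy)
    (fun x _ hx => by show φ x⁻¹ ∈ _; rw [map_inv]; exact inv_mem hx) hw

lemma aut_inv_eq (φ : MulAut (RAAG G)) {x y : RAAG G} (h : φ y = x) : φ⁻¹ x = y := by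
  rw [MulAut.inv_def, MulEquiv.symm_apply_eq]; exact h.symm

/-- The abelianization homomorphism to the free abelian group on V. -/
noncomputable def pHom : RAAG G →* Multiplicative (V →₀ ℤ) :=
  mkHom (fun v => Multiplicative.ofAdd (Finsupp.single v 1)) (fun _ _ _ => Commute.all _ _)

@[simp] lemma pHom_gen (v : V) :
    Multiplicative.toAdd (pHom (G := G) (gen G v)) = Finsupp.single v 1 := by
  simp [pHom]

end RD
end RDAux
section RDGraphBasic

variable {G : SimpleGraph V}

namespace RD

lemma mem_st_iff {a z : V} : z ∈ st G a ↔ z = a ∨ G.Adj a z := by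
  simp [st, lk, Set.mem_insert_iff]

lemma dom_commute {a b z : V} (hd : Dominates G a b) (hz : G.Adj b z) :
    Commute (gen G z) (gen G a) := by
  have h1 : z ∈ st G a := hd hz
  rcases mem_st_iff.1 h1 with rfl | h
  · exact Commute.refl _
  · exact (gen_commute h).symm


/-- membership facts for components -/
lemma comp_not_adj {c : V} {Y : Set V} (hY : IsCompOf G ((st G c)ᶜ) Y) {v : V} (hv : v ∈ Y) :
    ¬ G.Adj c v ∧ v ≠ c := by
  have h1 : v ∈ (st G c)ᶜ := hY.2.1 hv
  constructor
  · intro h; exact h1 (Set.mem_insert_iff.2 (Or.inr h))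
  · intro h; exact h1 (Set.mem_insert_iff.2 (Or.inl h))

lemma comp_adj_mem {S : Set V} {Y : Set V} (hY : IsCompOf G S Y) {u v : V}
    (hu : u ∈ Y) (hadj : G.Adj u v) (hv : v ∈ S) : v ∈ Y := by
  have hu' : u ∈ S := hY.2.1 hu
  have hreach : (G.induce S).Reachable ⟨u, hu'⟩ ⟨v, hv⟩ := by
    apply SimpleGraph.Adj.reachable
    simpa [SimpleGraph.induce] using hadj
  exact (hY.2.2 ⟨u, hu'⟩ hu ⟨v, hv⟩).1 hreach

lemma comp_disjoint {S Y1 Y2 : Set V} (h1 : IsCompOf G S Y1) (h2 : IsCompOf G S Y2)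
    (hne : Y1 ≠ Y2) {v : V} (hv1 : v ∈ Y1) : v ∉ Y2 := by
  intro hv2
  apply hne
  ext b
  constructor
  · intro hb
    have hreach := (h1.2.2 ⟨v, h1.2.1 hv1⟩ hv1 ⟨b, h1.2.1 hb⟩).2 hb
    exact (h2.2.2 ⟨v, h1.2.1 hv1⟩ hv2 ⟨b, h1.2.1 hb⟩).1 hreach
  · intro hb
    have hreach := (h2.2.2 ⟨v, h2.2.1 hv2⟩ hv2 ⟨b, h2.2.1 hb⟩).2 hb
    exact (h1.2.2 ⟨v, h2.2.1 hv2⟩ hv1 ⟨b, h2.2.1 hb⟩).1 hreach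


end RD
end RDGraphBasic
section RDTv

open Finsupp

variable {G : SimpleGraph V} [DecidableEq V]

set_option linter.unusedSectionVars false

namespace RD

def tvF (a b : V) : V → RAAG G := fun v => if v = b then gen G b * gen G a else gen G v
def tvG (a b : V) : V → RAAG G := fun v => if v = b then gen G b * (gen G a)⁻¹ else gen G v

lemma tv_hf {a b : V} (hd : Dominates G a b) :
    ∀ ⦃x y⦄, G.Adj x y → Commute (tvF (G := G) a b x) (tvF (G := G) a b y) := by
  intro x y hxy
  unfold tvF
  by_cases hx : x = b <;> by_cases hy : y = b
  · exact absurd (hx.trans hy.symm) (adj_ne hxy)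
  · subst hx; rw [if_pos rfl, if_neg hy]
    exact (gen_commute hxy).mul_left (dom_commute hd hxy).symm
  · subst hy; rw [if_pos rfl, if_neg hx]
    exact (gen_commute hxy).mul_right (dom_commute hd hxy.symm)
  · rw [if_neg hx, if_neg hy]; exact gen_commute hxy

lemma tv_hg {a b : V} (hd : Dominates G a b) :
    ∀ ⦃x y⦄, G.Adj x y → Commute (tvG (G := G) a b x) (tvG (G := G) a b y) := by
  intro x y hxy
  unfold tvG
  by_cases hx : x = b <;> by_cases hy : y = b
  · exact absurd (hx.trans hy.symm) (adj_ne hxy)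
  · subst hx; rw [if_pos rfl, if_neg hy]
    exact (gen_commute hxy).mul_left (dom_commute hd hxy).symm.inv_left
  · subst hy; rw [if_pos rfl, if_neg hx]
    exact (gen_commute hxy).mul_right (dom_commute hd hxy.symm).inv_right
  · rw [if_neg hx, if_neg hy]; exact gen_commute hxy

/-- The (right) transvection multiplying the generator `b` by the dominating generator `a`. -/
def tv {a b : V} (hab : a ≠ b) (hd : Dominates G a b) : MulAut (RAAG G) :=
  mkAut (tvF a b) (tvG a b) (tv_hf hd) (tv_hg hd)
    (by
      intro v
      unfold tvG
      by_cases hv : v = b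
      · subst hv
        rw [if_pos rfl, map_mul, map_inv, mkHom_gen, mkHom_gen]
        unfold tvF
        rw [if_pos rfl, if_neg hab, mul_inv_cancel_right]
      · rw [if_neg hv, mkHom_gen]; unfold tvF; rw [if_neg hv])
    (by
      intro v
      unfold tvF
      by_cases hv : v = b
      · subst hv
        rw [if_pos rfl, map_mul, mkHom_gen, mkHom_gen]
        unfold tvG
        rw [if_pos rfl, if_neg hab, inv_mul_cancel_right]
      · rw [if_neg hv, mkHom_gen]; unfold tvG; rw [if_neg hv])

lemma tv_gen {a b : V} (hab : a ≠ b) (hd : Dominates G a b) :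
    tv hab hd (gen G b) = gen G b * gen G a := by
  rw [tv, mkAut_gen]; unfold tvF; rw [if_pos rfl]

lemma tv_gen_ne {a b : V} (hab : a ≠ b) (hd : Dominates G a b) {v : V} (hv : v ≠ b) :
    tv hab hd (gen G v) = gen G v := by
  rw [tv, mkAut_gen]; unfold tvF; rw [if_neg hv]

lemma tv_pow_ne {a b : V} (hab : a ≠ b) (hd : Dominates G a b) {v : V} (hv : v ≠ b) (m : ℕ) :
    (tv hab hd ^ m) (gen G v) = gen G v := by
  induction m with
  | zero => rw [pow_zero, MulAut.one_apply]
  | succ m ih => rw [pow_succ, MulAut.mul_apply, tv_gen_ne hab hd hv, ih]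

lemma tv_pow {a b : V} (hab : a ≠ b) (hd : Dominates G a b) (m : ℕ) :
    (tv hab hd ^ m) (gen G b) = gen G b * (gen G a) ^ m := by
  induction m with
  | zero => rw [pow_zero, MulAut.one_apply, pow_zero, mul_one]
  | succ m ih =>
      rw [pow_succ', MulAut.mul_apply, ih, map_mul, map_pow, tv_gen hab hd,
        tv_gen_ne hab hd hab, mul_assoc, ← pow_succ']

lemma pHom_tv {a b : V} (hab : a ≠ b) (hd : Dominates G a b) (h : RAAG G) :
    Multiplicative.toAdd (pHom (tv hab hd h))
      = Multiplicative.toAdd (pHom h) + single a (Multiplicative.toAdd (pHom h) b) := by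
  have hmm : ∀ h1 h2 : RAAG G,
      (fun h : RAAG G =>
          pHom h * Multiplicative.ofAdd (single a (Multiplicative.toAdd (pHom h) b)))
          (h1 * h2)
        = (fun h : RAAG G =>
            pHom h * Multiplicative.ofAdd (single a (Multiplicative.toAdd (pHom h) b))) h1
          * (fun h : RAAG G =>
             pHom h * Multiplicative.ofAdd (single a (Multiplicative.toAdd (pHom h) b))) h2 := by
    intro h1 h2
    simp only [map_mul, toAdd_mul, Finsupp.add_apply, single_add, ofAdd_add]
    exact mul_mul_mul_comm _ _ _ _
  have key : pHom.comp (tv hab hd).toMonoidHom = MonoidHom.mk'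
      (fun h : RAAG G =>
        pHom h * Multiplicative.ofAdd (single a (Multiplicative.toAdd (pHom h) b))) hmm := by
    apply homext
    intro v
    simp only [MonoidHom.comp_apply, MulEquiv.coe_toMonoidHom, MonoidHom.mk'_apply]
    by_cases hv : v = b
    · subst hv
      rw [tv_gen]
      simp [single_apply, pHom]
    · rw [tv_gen_ne hab hd hv]
      simp [single_apply, hv, pHom]
  have := DFunLike.congr_fun key h
  simp only [MonoidHom.comp_apply, MulEquiv.coe_toMonoidHom, MonoidHom.mk'_apply] at this
  rw [this, toAdd_mul, toAdd_ofAdd]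

end RD
end RDTv
section RDPc

open Finsupp

variable {G : SimpleGraph V} [DecidableEq V]

set_option linter.unusedSectionVars false

namespace RD

lemma pHom_tv_pow {a b : V} (hab : a ≠ b) (hd : Dominates G a b) (m : ℕ) (h : RAAG G) :
    Multiplicative.toAdd (pHom ((tv hab hd ^ m) h))
      = Multiplicative.toAdd (pHom h)
        + single a ((m : ℤ) * Multiplicative.toAdd (pHom h) b) := by
  induction m with
  | zero => simp
  | succ m ih =>
      rw [pow_succ', MulAut.mul_apply, pHom_tv hab hd, ih]
      have hb : (Multiplicative.toAdd (pHom h) + single a ((m : ℤ)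
          * Multiplicative.toAdd (pHom h) b)) b = Multiplicative.toAdd (pHom h) b := by
        rw [Finsupp.add_apply, single_apply, if_neg hab, add_zero]
      rw [hb, add_assoc, ← single_add]
      congr 2
      push_cast
      ring

def pcF (c : V) (Y : Set V) [DecidablePred (· ∈ Y)] : V → RAAG G :=
  fun v => if v ∈ Y then (gen G c)⁻¹ * gen G v * gen G c else gen G v

def pcG (c : V) (Y : Set V) [DecidablePred (· ∈ Y)] : V → RAAG G :=
  fun v => if v ∈ Y then gen G c * gen G v * (gen G c)⁻¹ else gen G v

lemma pc_conj_commute {c x y : V} (h : Commute (gen G x) (gen G y)) :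
    Commute ((gen G c)⁻¹ * gen G x * gen G c) ((gen G c)⁻¹ * gen G y * gen G c) := by
  have := Commute.map h (MulAut.conj ((gen G c)⁻¹)).toMonoidHom
  simpa [MulAut.conj_apply, mul_assoc] using this

lemma pc_mixed_commute {c x y : V} (hcy : Commute (gen G c) (gen G y))
    (hxy : Commute (gen G x) (gen G y)) :
    Commute ((gen G c)⁻¹ * gen G x * gen G c) (gen G y) :=
  (hcy.inv_left.mul_left hxy).mul_left hcy

lemma pc_hf {c : V} {Y : Set V} [DecidablePred (· ∈ Y)]
    (hY : IsCompOf G ((st G c)ᶜ) Y) :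
    ∀ ⦃x y⦄, G.Adj x y → Commute (pcF (G := G) c Y x) (pcF (G := G) c Y y) := by
  intro x y hxy
  unfold pcF
  by_cases hx : x ∈ Y <;> by_cases hy : y ∈ Y
  · rw [if_pos hx, if_pos hy]; exact pc_conj_commute (gen_commute hxy)
  · rw [if_pos hx, if_neg hy]
    -- y ∉ Y, x ∈ Y, adjacent: then y ∈ st G c with y ≠ c
    have hyst : y ∈ st G c := by
      by_contra hyst
      exact hy (comp_adj_mem hY hx hxy hyst)
    have hyc : G.Adj c y := by
      rcases mem_st_iff.1 hyst with rfl | h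
      · exact absurd hxy.symm (comp_not_adj hY hx).1
      · exact h
    exact pc_mixed_commute (gen_commute hyc) (gen_commute hxy)
  · rw [if_pos hy, if_neg hx]
    have hxst : x ∈ st G c := by
      by_contra hxst
      exact hx (comp_adj_mem hY hy hxy.symm hxst)
    have hxc : G.Adj c x := by
      rcases mem_st_iff.1 hxst with rfl | h
      · exact absurd hxy (comp_not_adj hY hy).1
      · exact h
    exact (pc_mixed_commute (gen_commute hxc) (gen_commute hxy.symm)).symm
  · rw [if_neg hx, if_neg hy]; exact gen_commute hxy

lemma pc_conj_commute' {c x y : V} (h : Commute (gen G x) (gen G y)) :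
    Commute (gen G c * gen G x * (gen G c)⁻¹) (gen G c * gen G y * (gen G c)⁻¹) := by
  have := Commute.map h (MulAut.conj (gen G c)).toMonoidHom
  simpa [MulAut.conj_apply, mul_assoc] using this

lemma pc_mixed_commute' {c x y : V} (hcy : Commute (gen G c) (gen G y))
    (hxy : Commute (gen G x) (gen G y)) :
    Commute (gen G c * gen G x * (gen G c)⁻¹) (gen G y) :=
  (hcy.mul_left hxy).mul_left hcy.inv_left

lemma pc_hg {c : V} {Y : Set V} [DecidablePred (· ∈ Y)]
    (hY : IsCompOf G ((st G c)ᶜ) Y) :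
    ∀ ⦃x y⦄, G.Adj x y → Commute (pcG (G := G) c Y x) (pcG (G := G) c Y y) := by
  intro x y hxy
  unfold pcG
  by_cases hx : x ∈ Y <;> by_cases hy : y ∈ Y
  · rw [if_pos hx, if_pos hy]; exact pc_conj_commute' (gen_commute hxy)
  · rw [if_pos hx, if_neg hy]
    have hyst : y ∈ st G c := by
      by_contra hyst
      exact hy (comp_adj_mem hY hx hxy hyst)
    have hyc : G.Adj c y := by
      rcases mem_st_iff.1 hyst with rfl | h
      · exact absurd hxy.symm (comp_not_adj hY hx).1
      · exact h
    exact pc_mixed_commute' (gen_commute hyc) (gen_commute hxy)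
  · rw [if_pos hy, if_neg hx]
    have hxst : x ∈ st G c := by
      by_contra hxst
      exact hx (comp_adj_mem hY hy hxy.symm hxst)
    have hxc : G.Adj c x := by
      rcases mem_st_iff.1 hxst with rfl | h
      · exact absurd hxy (comp_not_adj hY hy).1
      · exact h
    exact (pc_mixed_commute' (gen_commute hxc) (gen_commute hxy.symm)).symm
  · rw [if_neg hx, if_neg hy]; exact gen_commute hxy

/-- The partial conjugation of the component `Y` by the generator `c`. -/
def pc (c : V) {Y : Set V} [DecidablePred (· ∈ Y)]
    (hY : IsCompOf G ((st G c)ᶜ) Y) : MulAut (RAAG G) :=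
  mkAut (pcF c Y) (pcG c Y) (pc_hf hY) (pc_hg hY)
    (by
      intro v
      unfold pcG
      by_cases hv : v ∈ Y
      · have hcY : c ∉ Y := fun h => (comp_not_adj hY h).2 rfl
        rw [if_pos hv]
        simp only [map_mul, map_inv, mkHom_gen]
        unfold pcF
        rw [if_pos hv, if_neg hcY]
        group
      · rw [if_neg hv, mkHom_gen]; unfold pcF; rw [if_neg hv])
    (by
      intro v
      unfold pcF
      by_cases hv : v ∈ Y
      · have hcY : c ∉ Y := fun h => (comp_not_adj hY h).2 rfl
        rw [if_pos hv]
        simp only [map_mul, map_inv, mkHom_gen]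
        unfold pcG
        rw [if_pos hv, if_neg hcY]
        group
      · rw [if_neg hv, mkHom_gen]; unfold pcG; rw [if_neg hv])

lemma pc_gen_mem {c : V} {Y : Set V} [DecidablePred (· ∈ Y)]
    (hY : IsCompOf G ((st G c)ᶜ) Y) {v : V} (hv : v ∈ Y) :
    pc c hY (gen G v) = (gen G c)⁻¹ * gen G v * gen G c := by
  rw [pc, mkAut_gen]; unfold pcF; rw [if_pos hv]

lemma pc_gen_ne {c : V} {Y : Set V} [DecidablePred (· ∈ Y)]
    (hY : IsCompOf G ((st G c)ᶜ) Y) {v : V} (hv : v ∉ Y) :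
    pc c hY (gen G v) = gen G v := by
  rw [pc, mkAut_gen]; unfold pcF; rw [if_neg hv]

lemma pc_pow_ne {c : V} {Y : Set V} [DecidablePred (· ∈ Y)]
    (hY : IsCompOf G ((st G c)ᶜ) Y) {v : V} (hv : v ∉ Y) (n : ℕ) :
    (pc c hY ^ n) (gen G v) = gen G v := by
  induction n with
  | zero => rw [pow_zero, MulAut.one_apply]
  | succ n ih => rw [pow_succ, MulAut.mul_apply, pc_gen_ne hY hv, ih]

lemma pc_pow_mem {c : V} {Y : Set V} [DecidablePred (· ∈ Y)]
    (hY : IsCompOf G ((st G c)ᶜ) Y) {v : V} (hv : v ∈ Y) (n : ℕ) :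
    (pc c hY ^ n) (gen G v) = ((gen G c) ^ n)⁻¹ * gen G v * (gen G c) ^ n := by
  have hcY : c ∉ Y := fun h => (comp_not_adj hY h).2 rfl
  induction n with
  | zero => simp
  | succ n ih =>
      rw [pow_succ', MulAut.mul_apply, ih, map_mul, map_mul, map_inv, map_pow,
        pc_gen_mem hY hv, pc_gen_ne hY hcY]
      group

end RD
end RDPc
section RDHei

namespace RD

/-- The integral Heisenberg group. -/
@[ext] structure Hei where
  a : ℤ
  b : ℤ
  c : ℤ

instance : Mul Hei := ⟨fun x y => ⟨x.a + y.a, x.b + y.b, x.c + y.c + x.a * y.b⟩⟩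
instance : One Hei := ⟨⟨0, 0, 0⟩⟩
instance : Inv Hei := ⟨fun x => ⟨-x.a, -x.b, -x.c + x.a * x.b⟩⟩

lemma hei_mul_def (x y : Hei) : x * y = ⟨x.a + y.a, x.b + y.b, x.c + y.c + x.a * y.b⟩ := rfl
lemma hei_one_def : (1 : Hei) = ⟨0, 0, 0⟩ := rfl
lemma hei_inv_def (x : Hei) : x⁻¹ = ⟨-x.a, -x.b, -x.c + x.a * x.b⟩ := rfl

instance : Group Hei :=
  Group.ofLeftAxioms
    (assoc := fun x y z => by
      simp only [hei_mul_def]; ext <;> dsimp <;> ring)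
    (one_mul := fun x => by
      simp only [hei_mul_def, hei_one_def]; ext <;> dsimp <;> ring)
    (inv_mul_cancel := fun x => by
      simp only [hei_mul_def, hei_inv_def, hei_one_def]; ext <;> dsimp <;> ring)

def heiT : Hei := ⟨1, 0, 0⟩
def heiL : Hei := ⟨0, 1, 0⟩

lemma heiT_zpow (n : ℤ) : heiT ^ n = ⟨n, 0, 0⟩ := by
  have hψ : ∀ m k : ℤ, (⟨m, 0, 0⟩ : Hei) * ⟨k, 0, 0⟩ = ⟨m + k, 0, 0⟩ := by
    intro m k; rw [hei_mul_def]; ext <;> dsimp <;> ring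
  induction n using Int.induction_on with
  | zero => rw [zpow_zero, hei_one_def]
  | succ k ih =>
      rw [zpow_add_one, ih]
      show Hei.mk _ _ _ * heiT = _
      rw [heiT, hψ]
  | pred k ih =>
      rw [zpow_sub_one, ih]
      have : (heiT)⁻¹ = (⟨-1, 0, 0⟩ : Hei) := by
        rw [heiT, hei_inv_def]; ext <;> dsimp <;> ring
      rw [this, hψ]
      congr 1

/-- The key non-commutation fact in the Heisenberg group. -/
lemma hei_contra {g : Hei} {c : ℤ}
    (h1 : g * heiT = heiT * g) (h2 : g * heiL = heiL * g)
    (h3 : g * heiL * g⁻¹ = heiT ^ c * heiL * (heiT ^ c)⁻¹) : c = 0 := by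
  have hb : g.b = 0 := by
    have := congrArg Hei.c h1
    simp [hei_mul_def, heiT] at this
    linarith
  have ha : g.a = 0 := by
    have := congrArg Hei.c h2
    simp [hei_mul_def, heiL] at this
    linarith
  have hL : g * heiL * g⁻¹ = heiL := by
    rw [hei_mul_def, hei_mul_def, hei_inv_def, heiL]
    ext <;> dsimp <;> simp [ha, hb] <;> ring
  have hR : heiT ^ c * heiL * (heiT ^ c)⁻¹ = ⟨0, 1, c⟩ := by
    rw [heiT_zpow, hei_mul_def, hei_inv_def, hei_mul_def, heiL]
    ext <;> dsimp <;> ring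
  rw [hL, hR, heiL] at h3
  have := congrArg Hei.c h3
  simpa using this.symm

end RD
end RDHei
section RDGraph

variable {G : SimpleGraph V}

namespace RD

lemma dominates_refl (G : SimpleGraph V) (x : V) : Dominates G x x := by
  intro z hz
  exact Set.mem_insert_iff.2 (Or.inr hz)

lemma dominates_trans {x y z : V} (h1 : Dominates G x y) (h2 : Dominates G y z) :
    Dominates G x z := by
  intro w hw
  have hzw : G.Adj z w := hw
  have hw' : w ∈ st G y := h2 hw
  rcases mem_st_iff.1 hw' with hwy | hadj
  · subst hwy
    -- now the middle vertex is called w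
    have hzlk : z ∈ lk G w := hzw.symm
    have hz : z ∈ st G x := h1 hzlk
    rcases mem_st_iff.1 hz with rfl | hxz
    · exact mem_st_iff.2 (Or.inr hzw)
    · have hxlk : x ∈ lk G z := hxz.symm
      have hx : x ∈ st G w := h2 hxlk
      rcases mem_st_iff.1 hx with rfl | hwx
      · exact mem_st_iff.2 (Or.inl rfl)
      · exact mem_st_iff.2 (Or.inr hwx.symm)
  · exact h1 hadj

lemma chain_dominates_getLast :
    ∀ (l : List V) (hl : l ≠ []) (_ : l.Chain' (Dominates G)) (y : V), y ∈ l →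
      Dominates G y (l.getLast hl)
  | [], hl, _, _, _ => absurd rfl hl
  | [a], _, _, y, hy => by
      simp only [List.mem_singleton] at hy
      rw [hy]
      exact dominates_refl G a
  | a :: b :: t, _, hc, y, hy => by
    have hc' : (b :: t).Chain' (Dominates G) := hc.tail
    have hab : Dominates G a b := (List.isChain_cons_cons.1 hc).1
    have hlast : (a :: b :: t).getLast (by simp) = (b :: t).getLast (by simp) :=
      List.getLast_cons (by simp)
    rw [hlast]
    rcases List.mem_cons.1 hy with rfl | hy'
    · exact dominates_trans hab
        (chain_dominates_getLast (b :: t) (by simp) hc' b (by simp))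
    · exact chain_dominates_getLast (b :: t) (by simp) hc' y hy'

/-- Any walk in the induced graph on a set avoiding `lk x1` which starts in a
component `Y` of `(st x1)ᶜ` stays in `Y`. -/
lemma walk_stays {x1 : V} {Y : Set V} (hY : IsCompOf G ((st G x1)ᶜ) Y)
    {T : Set V} (hT : T ⊆ (lk G x1)ᶜ) :
    ∀ (a b : T), (G.induce T).Walk a b → (a : V) ∈ Y → (b : V) ∈ Y := by
  intro a b w
  induction w with
  | nil => exact id
  | @cons u v q huv _ ih =>
      intro ha
      have hadj : G.Adj (u : V) (v : V) := by simpa using huv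
      have hvne : (v : V) ≠ x1 := by
        intro h
        have hu' : (u : V) ∈ (st G x1)ᶜ := hY.2.1 ha
        exact hu' (mem_st_iff.2 (Or.inr (h ▸ hadj).symm))
      have hvlk : (v : V) ∉ lk G x1 := hT v.2
      have hvst : (v : V) ∈ (st G x1)ᶜ := by
        intro hmem
        rcases mem_st_iff.1 hmem with h | h
        · exact hvne h
        · exact hvlk h
      exact ih (comp_adj_mem hY ha hadj hvst)

/-- Under no-SIL, any vertex dominating the bottom of a star-separation is in its star. -/
lemma dom_mem_st (h2 : ¬ SepIntLinks G) {x1 : V} {Y1 Y2 : Set V}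
    (hY1 : IsCompOf G ((st G x1)ᶜ) Y1) (hY2 : IsCompOf G ((st G x1)ᶜ) Y2)
    (hne : Y1 ≠ Y2) {y : V} (hdom : Dominates G y x1) : y ∈ st G x1 := by
  by_contra hyst
  have hyne : y ≠ x1 := fun h => hyst (h ▸ mem_st_iff.2 (Or.inl rfl))
  have hynadj : ¬ G.Adj x1 y := fun h => hyst (mem_st_iff.2 (Or.inr h))
  have hlk : lk G y ∩ lk G x1 = lk G x1 := by
    apply Set.inter_eq_self_of_subset_right
    intro z hz
    have hz' : z ∈ st G y := hdom hz
    rcases mem_st_iff.1 hz' with rfl | h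
    · exact absurd hz hynadj
    · exact h
  have hTsub : ((lk G y ∩ lk G x1)ᶜ : Set V) ⊆ (lk G x1)ᶜ := by rw [hlk]
  obtain ⟨Y, hY, hyY⟩ : ∃ Y, IsCompOf G ((st G x1)ᶜ) Y ∧ y ∉ Y := by
    by_cases hy1 : y ∈ Y1
    · exact ⟨Y2, hY2, comp_disjoint hY1 hY2 hne hy1⟩
    · exact ⟨Y1, hY1, hy1⟩
  obtain ⟨z, hz⟩ := hY.1
  apply h2
  have hzS : z ∈ (lk G y ∩ lk G x1)ᶜ := by
    rw [hlk]
    intro hmem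
    exact (hY.2.1 hz) (mem_st_iff.2 (Or.inr hmem))
  refine ⟨y, x1, hyne, fun h => hynadj h.symm, z, ?_, ?_⟩
  · have hyS : y ∈ ((lk G y ∩ lk G x1)ᶜ : Set V) := by
      rw [hlk]; exact hynadj
    refine ⟨hzS, hyS, fun hr => ?_⟩
    obtain ⟨w⟩ := hr
    exact hyY (walk_stays hY hTsub _ _ w hz)
  · have hx1S : x1 ∈ ((lk G y ∩ lk G x1)ᶜ : Set V) := by
      rw [hlk]; exact fun hmem => (G.loopless.irrefl x1) hmem
    refine ⟨hzS, hx1S, fun hr => ?_⟩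
    obtain ⟨w⟩ := hr
    exact (hY.2.1 (walk_stays hY hTsub _ _ w hz)) (mem_st_iff.2 (Or.inl rfl))

end RD
end RDGraph
section RDGrp

namespace RD

variable {Q : Type*} [Group Q]

lemma mem_map_lcs_zero (K : Subgroup Q) {b : Q} (hb : b ∈ K) :
    b ∈ (Subgroup.lowerCentralSeries (⊤ : Subgroup ↥K) 0).map K.subtype := by
  refine ⟨⟨b, hb⟩, ?_, rfl⟩
  rw [Subgroup.lowerCentralSeries_zero]
  trivial

lemma mem_map_lcs_step (K : Subgroup Q) {a b : Q} (ha : a ∈ K) {n : ℕ}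
    (hb : b ∈ (Subgroup.lowerCentralSeries (⊤ : Subgroup ↥K) n).map K.subtype) :
    ⁅a, b⁆ ∈ (Subgroup.lowerCentralSeries (⊤ : Subgroup ↥K) (n + 1)).map K.subtype := by
  obtain ⟨β, hβ, rfl⟩ := hb
  refine ⟨⁅(⟨a, ha⟩ : ↥K), β⁆, ?_, ?_⟩
  · have h1 : ⁅β, (⟨a, ha⟩ : ↥K)⁆ ∈ Subgroup.lowerCentralSeries (⊤ : Subgroup ↥K) (n + 1) := by
      rw [Subgroup.lowerCentralSeries_succ]
      exact Subgroup.commutator_mem_commutator hβ (Subgroup.mem_top _)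
    have h2 := inv_mem h1
    rwa [commutatorElement_inv] at h2
  · exact map_commutatorElement K.subtype _ _

lemma map_lcs_eq_bot (K : Subgroup Q) (hn : Group.IsNilpotent ↥K) {n : ℕ}
    (h : Group.nilpotencyClass ↥K ≤ n) :
    (Subgroup.lowerCentralSeries (⊤ : Subgroup ↥K) n).map K.subtype = ⊥ := by
  have h1 : Subgroup.lowerCentralSeries (⊤ : Subgroup ↥K) n
      ≤ Subgroup.lowerCentralSeries (⊤ : Subgroup ↥K) (Group.nilpotencyClass ↥K) :=
    Subgroup.lowerCentralSeries_antitone ⊤ h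
  rw [Subgroup.lowerCentralSeries_nilpotencyClass] at h1
  rw [le_bot_iff.1 h1, Subgroup.map_bot]

lemma exists_pow_mem (K : Subgroup Q) (hfi : K.FiniteIndex) (g : Q) :
    ∃ m : ℕ, 0 < m ∧ g ^ m ∈ K := by
  obtain ⟨n, hn0, _, hmem⟩ :=
    Subgroup.exists_pow_mem_of_index_ne_zero hfi.index_ne_zero g
  exact ⟨n, hn0, hmem⟩

end RD
end RDGrp

section RDSup

namespace RD

variable [Fintype V] (G : SimpleGraph V)

lemma domDepth_exists (x : V) :
    ∃ l : List V, IsDomChain G l ∧ l.head? = some x ∧ l.length = domDepth G x + 1 := by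
  have hne : {n | ∃ l : List V, IsDomChain G l ∧ l.head? = some x ∧ l.length = n + 1}.Nonempty :=
    ⟨0, [x], ⟨by simp, by simp, List.isChain_singleton x⟩, by simp, by simp⟩
  have hbdd : BddAbove {n | ∃ l : List V,
      IsDomChain G l ∧ l.head? = some x ∧ l.length = n + 1} := by
    refine ⟨Fintype.card V, ?_⟩
    rintro n ⟨l, hl, -, hlen⟩
    have := hl.2.1.length_le_card
    omega
  exact Nat.sSup_mem hne hbdd

lemma domDepth_le_card (x : V) : domDepth G x ≤ Fintype.card V := by
  apply csSup_le'
  rintro n ⟨l, hl, -, hlen⟩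
  have := hl.2.1.length_le_card
  omega

lemma ssDepth_exists (x : V) (h : 1 ≤ ssDepth G x) :
    ∃ (l : List V) (x1 : V), IsSSPChain G l x x1 ∧ l.length = ssDepth G x := by
  have hne : {n | ∃ (l : List V) (x1 : V), IsSSPChain G l x x1 ∧ l.length = n}.Nonempty := by
    by_contra hne
    rw [Set.not_nonempty_iff_eq_empty] at hne
    rw [ssDepth, hne, csSup_empty] at h
    exact absurd h (by simp)
  have hbdd : BddAbove {n | ∃ (l : List V) (x1 : V), IsSSPChain G l x x1 ∧ l.length = n} := by
    refine ⟨Fintype.card V, ?_⟩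
    rintro n ⟨l, x1, hl, hlen⟩
    have := hl.1.2.1.length_le_card
    omega
  exact Nat.sSup_mem hne hbdd

lemma ssDepth_le_card (x : V) : ssDepth G x ≤ Fintype.card V := by
  apply csSup_le'
  rintro n ⟨l, x1, hl, hlen⟩
  have := hl.1.2.1.length_le_card
  omega

lemma gdepth_exists (h : 1 ≤ gdepth G) : ∃ x : V, gdepth G = vdepth G x := by
  have hne : {n | ∃ x : V, n = vdepth G x}.Nonempty := by
    by_contra hne
    rw [Set.not_nonempty_iff_eq_empty] at hne
    rw [gdepth, hne, csSup_empty] at h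
    exact absurd h (by simp)
  have hbdd : BddAbove {n | ∃ x : V, n = vdepth G x} := by
    refine ⟨Fintype.card V, ?_⟩
    rintro n ⟨x, rfl⟩
    exact max_le (domDepth_le_card G x) (ssDepth_le_card G x)
  exact Nat.sSup_mem hne hbdd

end RD
end RDSup
section RDCase1

open Finsupp

variable {G : SimpleGraph V} [DecidableEq V]

set_option linter.unusedSectionVars false

namespace RD

set_option maxHeartbeats 1000000 in
lemma case1_ind (K : Subgroup (OutG G))
    (hm : ∀ φ : MulAut (RAAG G), ∃ m : ℕ, 0 < m ∧ (QuotientGroup.mk' (Inn (RAAG G)) φ) ^ m ∈ K)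
    (t : V) :
    ∀ (r : List V) (a : V), r ≠ [] →
      (a :: r).getLast (by simp) = t →
      (a :: r).Chain' (fun p q => Dominates G q p) →
      (a :: r).Nodup →
      ∃ (C : MulAut (RAAG G)) (u : RAAG G) (c : ℤ), c ≠ 0 ∧
        C (gen G a) = gen G a * u ∧
        (∀ z : V, z ≠ a → C (gen G z) = gen G z) ∧
        u ∈ Subgroup.closure (gen G '' {v | v ∈ r}) ∧
        Multiplicative.toAdd (pHom u) = single t c ∧
        QuotientGroup.mk' (Inn (RAAG G)) C
          ∈ (Subgroup.lowerCentralSeries (⊤ : Subgroup ↥K) (r.length - 1)).map K.subtype := by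
  intro r
  induction r with
  | nil => exact fun a h => absurd rfl h
  | cons b r' ih =>
    intro a _ hlast hch hnd
    have hdom : Dominates G b a := (List.isChain_cons_cons.1 hch).1
    have hba : b ≠ a := by
      have := (List.nodup_cons.1 hnd).1
      simp only [List.mem_cons] at this
      tauto
    obtain ⟨m, hm0, hmK⟩ := hm (tv hba hdom)
    have hmZ : ((m : ℤ)) ≠ 0 := Int.natCast_ne_zero.2 hm0.ne'
    cases r' with
    | nil =>
        have htb : b = t := by simpa using hlast
        refine ⟨tv hba hdom ^ m, (gen G b) ^ m, (m : ℤ), hmZ, ?_, ?_, ?_, ?_, ?_⟩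
        · exact tv_pow hba hdom m
        · exact fun z hz => tv_pow_ne hba hdom hz m
        · exact pow_mem (Subgroup.subset_closure
            (Set.mem_image_of_mem _ (show b ∈ {v | v ∈ [b]} by simp))) m
        · simp only [map_pow, toAdd_pow, pHom_gen, smul_single, htb]
          simp
        · rw [map_pow]
          simpa using mem_map_lcs_zero K hmK
    | cons b2 r'' =>
        obtain ⟨C, u, c, hc0, hCb, hCz, hucl, hup, hCmem⟩ :=
          ih b (by simp)
            (by rw [← hlast]; exact (List.getLast_cons (by simp)).symm)
            hch.tail (List.nodup_cons.1 hnd).2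
        have hanotin : a ∉ b :: b2 :: r'' := (List.nodup_cons.1 hnd).1
        have hbnotin : b ∉ b2 :: r'' := (List.nodup_cons.1 (List.nodup_cons.1 hnd).2).1
        set T := tv hba hdom ^ m with hT
        have hTz : ∀ z : V, z ≠ a → T (gen G z) = gen G z :=
          fun z hz => tv_pow_ne hba hdom hz m
        have hTa : T (gen G a) = gen G a * (gen G b) ^ m := tv_pow hba hdom m
        have hCu : C u = u := by
          refine fix_closure C ?_ u hucl
          rintro x ⟨v, hv, rfl⟩
          refine hCz v ?_
          intro h; rw [h] at hv; exact hbnotin hv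
        have hTu : T u = u := by
          refine fix_closure T ?_ u hucl
          rintro x ⟨v, hv, rfl⟩
          refine hTz v ?_
          intro h; rw [h] at hv; exact hanotin (List.mem_cons_of_mem b hv)
        have hTb : T (gen G b) = gen G b := hTz b hba
        have hCa : C (gen G a) = gen G a := hCz a (fun h => hba h.symm)
        have hCinva : C⁻¹ (gen G a) = gen G a := aut_inv_eq C hCa
        have hCinvb : C⁻¹ (gen G b) = gen G b * u⁻¹ := by
          refine aut_inv_eq C ?_
          rw [map_mul, map_inv, hCb, hCu, mul_assoc, mul_inv_cancel, mul_one]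
        have hTinva : T⁻¹ (gen G a) = gen G a * ((gen G b) ^ m)⁻¹ := by
          refine aut_inv_eq T ?_
          rw [map_mul, map_inv, map_pow, hTa, hTb, mul_assoc, mul_inv_cancel, mul_one]
        have hTinvb : T⁻¹ (gen G b) = gen G b := aut_inv_eq T hTb
        have hTinvu : T⁻¹ u = u := aut_inv_eq T hTu
        set C' := ⁅T, C⁆ with hC'
        set u' := (gen G b) ^ m * ((gen G b * u) ^ m)⁻¹ with hu'
        have happly : ∀ x : RAAG G, C' x = T (C (T⁻¹ (C⁻¹ x))) := by
          intro x
          rw [hC', commutatorElement_def, MulAut.mul_apply, MulAut.mul_apply,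
            MulAut.mul_apply]
        refine ⟨C', u', -((m : ℤ) * c), neg_ne_zero.2 (mul_ne_zero hmZ hc0), ?_, ?_, ?_, ?_, ?_⟩
        · calc C' (gen G a) = T (C (T⁻¹ (C⁻¹ (gen G a)))) := happly _
            _ = T (C (gen G a * ((gen G b) ^ m)⁻¹)) := by rw [hCinva, hTinva]
            _ = T (gen G a * ((gen G b * u) ^ m)⁻¹) := by
                rw [map_mul, map_inv, map_pow, hCa, hCb]
            _ = gen G a * (gen G b) ^ m * ((gen G b * u) ^ m)⁻¹ := by
                rw [map_mul, map_inv, map_pow, map_mul, hTa, hTb, hTu]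
            _ = gen G a * u' := by rw [hu', mul_assoc]
        · intro z hz
          by_cases hzb : z = b
          · subst hzb
            calc C' (gen G z) = T (C (T⁻¹ (C⁻¹ (gen G z)))) := happly _
              _ = T (C (gen G z * u⁻¹)) := by
                  rw [hCinvb, map_mul, map_inv, hTinvb, hTinvu]
              _ = T (gen G z) := by
                  rw [map_mul, map_inv, hCb, hCu, mul_assoc, mul_inv_cancel, mul_one]
              _ = gen G z := hTb
          · have h1 : C (gen G z) = gen G z := hCz z hzb
            have h2 : T (gen G z) = gen G z := hTz z hz
            calc C' (gen G z) = T (C (T⁻¹ (C⁻¹ (gen G z)))) := happly _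
              _ = gen G z := by rw [aut_inv_eq C h1, aut_inv_eq T h2, h1, h2]
        · have hgb : gen G b ∈ Subgroup.closure (gen G '' {v | v ∈ b :: b2 :: r''}) :=
            Subgroup.subset_closure ⟨b, by simp, rfl⟩
          have humem : u ∈ Subgroup.closure (gen G '' {v | v ∈ b :: b2 :: r''}) := by
            refine Subgroup.closure_mono (Set.image_mono ?_) hucl
            intro v hv
            exact List.mem_cons_of_mem b hv
          exact mul_mem (pow_mem hgb m) (inv_mem (pow_mem (mul_mem hgb humem) m))
        · have h1 : (m : ℕ) • Finsupp.single t c = Finsupp.single t ((m : ℤ) * c) := by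
            rw [smul_single, nsmul_eq_mul]
          rw [hu']
          simp only [map_mul, map_inv, map_pow, toAdd_mul, toAdd_inv, toAdd_pow, pHom_gen, hup]
          rw [smul_add, h1, single_neg]
          abel
        · have hmemT : (QuotientGroup.mk' (Inn (RAAG G))) T ∈ K := by
            rw [hT, map_pow]; exact hmK
          have := mem_map_lcs_step K hmemT hCmem
          rw [hC', map_commutatorElement]
          simpa using this

end RD
end RDCase1
section RDCase1W

open Finsupp

variable {G : SimpleGraph V} [DecidableEq V]

set_option linter.unusedSectionVars false

namespace RD

lemma pHom_conj (g x : RAAG G) : pHom (g * x * g⁻¹) = pHom x := by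
  rw [map_mul, map_mul, map_inv, mul_comm (pHom g), mul_assoc, mul_inv_cancel, mul_one]

lemma case1 (K : Subgroup (OutG G)) (hn : Group.IsNilpotent ↥K)
    (hm : ∀ φ : MulAut (RAAG G), ∃ m : ℕ, 0 < m ∧ (QuotientGroup.mk' (Inn (RAAG G)) φ) ^ m ∈ K)
    (l : List V) (hl : IsDomChain G l) {d : ℕ} (hlen : l.length = d + 1) (hd : 1 ≤ d) :
    d ≤ Group.nilpotencyClass ↥K := by
  by_contra hcon
  push_neg at hcon
  obtain ⟨a, r0, hr0⟩ : ∃ (a : V) (r0 : List V), l.reverse = a :: r0 := by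
    cases h : l.reverse with
    | nil => exfalso; have := congrArg List.length h; simp [hlen] at this
    | cons a r0 => exact ⟨a, r0, rfl⟩
  have hr0len : r0.length = d := by
    have := congrArg List.length hr0
    simp [hlen] at this
    omega
  have hr0ne : r0 ≠ [] := by
    intro h; rw [h] at hr0len; simp at hr0len; omega
  have hch : (a :: r0).Chain' (fun p q => Dominates G q p) := by
    have h1 : ((a :: r0).reverse).Chain' (Dominates G) := by
      rw [← hr0, List.reverse_reverse]; exact hl.2.2
    exact List.isChain_reverse.mp h1
  have hnd : (a :: r0).Nodup := by
    rw [← hr0, List.nodup_reverse]; exact hl.2.1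
  obtain ⟨C, u, c, hc0, hCa, _, _, hup, hCmem⟩ :=
    case1_ind K hm ((a :: r0).getLast (by simp)) r0 a hr0ne rfl hch hnd
  rw [hr0len, map_lcs_eq_bot K hn (by omega)] at hCmem
  have hC1 : (QuotientGroup.mk' (Inn (RAAG G))) C = 1 := Subgroup.mem_bot.1 hCmem
  have hCInn : C ∈ Inn (RAAG G) := by
    rwa [QuotientGroup.mk'_apply, QuotientGroup.eq_one_iff] at hC1
  obtain ⟨g, hg⟩ := hCInn
  have heq : g * gen G a * g⁻¹ = gen G a * u := by
    rw [← hCa, ← hg]; rfl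
  have hp := congrArg pHom heq
  rw [pHom_conj, map_mul, eq_comm, mul_eq_left] at hp
  have : Multiplicative.toAdd (pHom u) = 0 := by rw [hp]; rfl
  rw [hup] at this
  exact hc0 (Finsupp.single_eq_zero.1 this)

end RD
end RDCase1W
section RDCase2

open Finsupp

variable {G : SimpleGraph V} [DecidableEq V]

set_option linter.unusedSectionVars false

namespace RD

set_option maxHeartbeats 1000000 in
lemma case2_ind (K : Subgroup (OutG G))
    (hm : ∀ φ : MulAut (RAAG G), ∃ m : ℕ, 0 < m ∧ (QuotientGroup.mk' (Inn (RAAG G)) φ) ^ m ∈ K)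
    {x1 : V} {Y1 : Set V} [DecidablePred (· ∈ Y1)]
    (hY1 : IsCompOf G ((st G x1)ᶜ) Y1) :
    ∀ (s' : List V) (y : V),
      (y :: s').getLast (by simp) = x1 →
      (y :: s').Chain' (Dominates G) →
      (y :: s').Nodup →
      (∀ v ∈ y :: s', v ∈ st G x1) →
      ∃ (W : MulAut (RAAG G)) (w : RAAG G) (c : ℤ), c ≠ 0 ∧
        (∀ v ∈ Y1, W (gen G v) = w * gen G v * w⁻¹) ∧
        (∀ z : V, z ∉ Y1 → W (gen G z) = gen G z) ∧
        w ∈ Subgroup.closure (gen G '' {v | v ∈ y :: s'}) ∧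
        Multiplicative.toAdd (pHom w) = single y c ∧
        QuotientGroup.mk' (Inn (RAAG G)) W
          ∈ (Subgroup.lowerCentralSeries (⊤ : Subgroup ↥K) ((y :: s').length - 1)).map K.subtype := by
  intro s'
  induction s' with
  | nil =>
    intro y hlast _ _ _
    have hy : y = x1 := by simpa using hlast
    subst hy
    obtain ⟨n, hn0, hnK⟩ := hm (pc y hY1)
    have hnZ : ((n : ℤ)) ≠ 0 := Int.natCast_ne_zero.2 hn0.ne'
    refine ⟨pc y hY1 ^ n, ((gen G y) ^ n)⁻¹, -(n : ℤ), neg_ne_zero.2 hnZ, ?_, ?_, ?_, ?_, ?_⟩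
    · intro v hv
      rw [pc_pow_mem hY1 hv n, inv_inv]
    · exact fun z hz => pc_pow_ne hY1 hz n
    · exact inv_mem (pow_mem (Subgroup.subset_closure
        (Set.mem_image_of_mem _ (show y ∈ {v | v ∈ [y]} by simp))) n)
    · simp only [map_inv, map_pow, toAdd_inv, toAdd_pow, pHom_gen, smul_single]
      rw [← single_neg]
      simp
    · rw [map_pow]
      simpa using mem_map_lcs_zero K hnK
  | cons y2 s'' ih =>
    intro y hlast hch hnd hst
    have hdom : Dominates G y y2 := (List.isChain_cons_cons.1 hch).1
    have hyy2 : y ≠ y2 := by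
      have := (List.nodup_cons.1 hnd).1
      simp only [List.mem_cons] at this
      tauto
    obtain ⟨m, hm0, hmK⟩ := hm (tv hyy2 hdom)
    have hmZ : ((m : ℤ)) ≠ 0 := Int.natCast_ne_zero.2 hm0.ne'
    obtain ⟨W, w, c, hc0, hWv, hWz, hwcl, hwp, hWmem⟩ :=
      ih y2 (by rw [← hlast]; exact (List.getLast_cons (by simp)).symm)
        hch.tail (List.nodup_cons.1 hnd).2
        (fun v hv => hst v (List.mem_cons_of_mem y hv))
    have hnotY1 : ∀ v ∈ y :: y2 :: s'', v ∉ Y1 := by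
      intro v hv hvY
      exact (hY1.2.1 hvY) (hst v hv)
    have hyY1 : y ∉ Y1 := hnotY1 y (by simp)
    have hy2Y1 : y2 ∉ Y1 := hnotY1 y2 (by simp)
    have hgy : gen G y ∈ Subgroup.closure (gen G '' {v | v ∈ y :: y2 :: s''}) :=
      Subgroup.subset_closure
        (Set.mem_image_of_mem _ (show y ∈ {v | v ∈ y :: y2 :: s''} by simp))
    have hgy2 : gen G y2 ∈ Subgroup.closure (gen G '' {v | v ∈ y :: y2 :: s''}) :=
      Subgroup.subset_closure
        (Set.mem_image_of_mem _ (show y2 ∈ {v | v ∈ y :: y2 :: s''} by simp))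
    set T := tv hyy2 hdom ^ m with hT
    have hTz : ∀ z : V, z ≠ y2 → T (gen G z) = gen G z :=
      fun z hz => tv_pow_ne hyy2 hdom hz m
    have hTy2 : T (gen G y2) = gen G y2 * (gen G y) ^ m := tv_pow hyy2 hdom m
    have hTy : T (gen G y) = gen G y := hTz y hyy2
    have hWfixcl : ∀ h ∈ Subgroup.closure (gen G '' {v | v ∈ y :: y2 :: s''}), W h = h := by
      refine fix_closure W ?_
      rintro h ⟨v, hv, rfl⟩
      exact hWz v (hnotY1 v hv)
    have hwcl' : w ∈ Subgroup.closure (gen G '' {v | v ∈ y :: y2 :: s''}) := by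
      refine Subgroup.closure_mono (Set.image_mono ?_) hwcl
      intro v hv
      exact List.mem_cons_of_mem y hv
    have hWw : W w = w := hWfixcl w hwcl'
    set u := T⁻¹ w with hu
    have hTu : T u = w := by
      rw [hu, MulAut.inv_def]
      exact T.apply_symm_apply w
    have hTinvy2 : T⁻¹ (gen G y2) = gen G y2 * ((gen G y) ^ m)⁻¹ := by
      refine aut_inv_eq T ?_
      rw [map_mul, map_inv, map_pow, hTy2, hTy, mul_assoc, mul_inv_cancel, mul_one]
    have hucl : u ∈ Subgroup.closure (gen G '' {v | v ∈ y :: y2 :: s''}) := by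
      rw [hu]
      refine maps_closure T⁻¹ ?_ w hwcl'
      rintro h ⟨v, hv, rfl⟩
      by_cases hvy2 : v = y2
      · subst hvy2
        rw [hTinvy2]
        exact mul_mem hgy2 (inv_mem (pow_mem hgy m))
      · rw [aut_inv_eq T (hTz v hvy2)]
        exact Subgroup.subset_closure
          (Set.mem_image_of_mem _ (show v ∈ {v | v ∈ y :: y2 :: s''} by
            simp only [Set.mem_setOf_eq, List.mem_cons] at hv ⊢
            tauto))
    have hWu : W u = u := hWfixcl u hucl
    have hTwcl : T w ∈ Subgroup.closure (gen G '' {v | v ∈ y :: y2 :: s''}) := by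
      refine maps_closure T ?_ w hwcl'
      rintro h ⟨v, hv, rfl⟩
      by_cases hvy2 : v = y2
      · subst hvy2
        rw [hTy2]
        exact mul_mem hgy2 (pow_mem hgy m)
      · rw [hTz v hvy2]
        exact Subgroup.subset_closure
          (Set.mem_image_of_mem _ (show v ∈ {v | v ∈ y :: y2 :: s''} by
            simp only [Set.mem_setOf_eq, List.mem_cons] at hv ⊢
            tauto))
    set W' := ⁅T, W⁆ with hW'
    set w' := w⁻¹ * T w with hw'
    have happly : ∀ x : RAAG G, W' x = T (W (T⁻¹ (W⁻¹ x))) := by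
      intro x
      rw [hW', commutatorElement_def, MulAut.mul_apply, MulAut.mul_apply, MulAut.mul_apply]
    refine ⟨W', w', (m : ℤ) * c, mul_ne_zero hmZ hc0, ?_, ?_, ?_, ?_, ?_⟩
    · intro v hv
      have hvy2 : v ≠ y2 := fun h => hy2Y1 (h ▸ hv)
      have hTv : T (gen G v) = gen G v := hTz v hvy2
      have hWinvv : W⁻¹ (gen G v) = w⁻¹ * gen G v * w := by
        refine aut_inv_eq W ?_
        rw [map_mul, map_mul, map_inv, hWw, hWv v hv]
        group
      calc W' (gen G v) = T (W (T⁻¹ (W⁻¹ (gen G v)))) := happly _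
        _ = T (W (u⁻¹ * gen G v * u)) := by
            rw [hWinvv]
            simp only [map_mul, map_inv]
            rw [aut_inv_eq T hTv, ← hu]
        _ = T (u⁻¹ * (w * gen G v * w⁻¹) * u) := by
            simp only [map_mul, map_inv]
            rw [hWu, hWv v hv]
            simp only [map_mul, map_inv]
        _ = w⁻¹ * (T w * gen G v * (T w)⁻¹) * w := by
            simp only [map_mul, map_inv]
            rw [hTu, hTv]
        _ = w' * gen G v * w'⁻¹ := by
            rw [hw']
            group
    · intro z hz
      by_cases hzy2 : z = y2
      · subst hzy2
        have hWy2 : W (gen G z) = gen G z := hWz z hz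
        calc W' (gen G z) = T (W (T⁻¹ (W⁻¹ (gen G z)))) := happly _
          _ = T (W (gen G z * ((gen G y) ^ m)⁻¹)) := by
              rw [aut_inv_eq W hWy2, hTinvy2]
          _ = T (gen G z * ((gen G y) ^ m)⁻¹) := by
              rw [map_mul, map_inv, map_pow, hWy2, hWz y hyY1]
          _ = gen G z := by
              rw [map_mul, map_inv, map_pow, hTy2, hTy, mul_assoc, mul_inv_cancel, mul_one]
      · have h1 : W (gen G z) = gen G z := hWz z hz
        have h2 : T (gen G z) = gen G z := hTz z hzy2
        calc W' (gen G z) = T (W (T⁻¹ (W⁻¹ (gen G z)))) := happly _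
          _ = gen G z := by rw [aut_inv_eq W h1, aut_inv_eq T h2, h1, h2]
    · exact mul_mem (inv_mem hwcl') hTwcl
    · have hTwp : Multiplicative.toAdd (pHom (T w))
          = single y2 c + single y ((m : ℤ) * c) := by
        rw [hT, pHom_tv_pow hyy2 hdom m w, hwp, Finsupp.single_eq_same]
      rw [hw']
      simp only [map_mul, map_inv, toAdd_mul, toAdd_inv, hwp, hTwp]
      abel
    · have hmemT : (QuotientGroup.mk' (Inn (RAAG G))) T ∈ K := by
        rw [hT, map_pow]; exact hmK
      have := mem_map_lcs_step K hmemT hWmem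
      rw [hW', map_commutatorElement]
      simpa using this

end RD
end RDCase2
section RDCase2W

open Finsupp

variable {G : SimpleGraph V} [DecidableEq V]

set_option linter.unusedSectionVars false

namespace RD

set_option maxHeartbeats 1000000 in
lemma case2 (h2 : ¬ SepIntLinks G) (K : Subgroup (OutG G)) (hn : Group.IsNilpotent ↥K)
    (hm : ∀ φ : MulAut (RAAG G), ∃ m : ℕ, 0 < m ∧ (QuotientGroup.mk' (Inn (RAAG G)) φ) ^ m ∈ K)
    (l : List V) (x x1 : V) (hl : IsSSPChain G l x x1) {d : ℕ}
    (hlen : l.length = d) (hd : 1 ≤ d) :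
    d ≤ Group.nilpotencyClass ↥K := by
  classical
  by_contra hcon
  push_neg at hcon
  obtain ⟨⟨hlne, hlnd, hlch⟩, hhead, hlastq, Y1, Y2, hY1, hY2, hne, hns1, hns2⟩ := hl
  obtain ⟨y, s', rfl⟩ : ∃ (y : V) (s' : List V), l = y :: s' := by
    cases l with
    | nil => exact absurd rfl hlne
    | cons y s' => exact ⟨y, s', rfl⟩
  have hyx : y = x := by simpa using hhead
  subst hyx
  have hgl : (y :: s').getLast (by simp) = x1 := by
    have h := hlastq
    rw [List.getLast?_eq_getLast (by simp), Option.some_inj] at h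
    exact h
  have hst : ∀ v ∈ y :: s', v ∈ st G x1 := by
    intro v hv
    have hdom : Dominates G v x1 := by
      have := chain_dominates_getLast (y :: s') (by simp) hlch v hv
      rwa [hgl] at this
    exact dom_mem_st h2 hY1 hY2 hne hdom
  obtain ⟨W, w, c, hc0, hWv, hWz, hwcl, hwp, hWmem⟩ :=
    case2_ind K hm hY1 s' y hgl hlch hlnd hst
  have hlen' : (y :: s').length - 1 = d - 1 := by
    rw [hlen]
  rw [hlen', map_lcs_eq_bot K hn (by omega)] at hWmem
  have hWInn : W ∈ Inn (RAAG G) := by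
    have h := Subgroup.mem_bot.1 hWmem
    rwa [QuotientGroup.mk'_apply, QuotientGroup.eq_one_iff] at h
  obtain ⟨g, hg⟩ := hWInn
  have hconj : ∀ z : RAAG G, W z = g * z * g⁻¹ := fun z => by rw [← hg]; rfl
  obtain ⟨a1, ha1Y, ha1st⟩ := Set.not_subset.1 hns1
  obtain ⟨a2, ha2Y, ha2st⟩ := Set.not_subset.1 hns2
  have ha1x1 : a1 ∈ (st G x1)ᶜ := hY1.2.1 ha1Y
  have ha2x1 : a2 ∈ (st G x1)ᶜ := hY2.2.1 ha2Y
  have ha2Y1 : a2 ∉ Y1 := comp_disjoint hY2 hY1 hne.symm ha2Y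
  have hyY1 : y ∉ Y1 := fun h => (hY1.2.1 h) (hst y (by simp))
  have ha1y : a1 ≠ y := fun h => ha1st (h ▸ mem_st_iff.2 (Or.inl rfl))
  have ha2y : a2 ≠ y := fun h => ha2st (h ▸ mem_st_iff.2 (Or.inl rfl))
  -- the Heisenberg representation
  set f : V → Hei := fun v => if v = y then heiT else if v = a1 ∨ v = a2 then heiL else 1
    with hfdef
  have hfcomm : ∀ ⦃p q⦄, G.Adj p q → Commute (f p) (f q) := by
    intro p q hpq
    have key : ∀ r, G.Adj y r → (r = a1 ∨ r = a2) → False := by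
      rintro r hadj (rfl | rfl)
      · exact ha1st (mem_st_iff.2 (Or.inr hadj))
      · exact ha2st (mem_st_iff.2 (Or.inr hadj))
    by_cases hp : p = y <;> by_cases hq : q = y
    · exact absurd (hp.trans hq.symm) (adj_ne hpq)
    · subst hp
      simp only [hfdef, if_pos rfl, if_neg hq]
      by_cases hq2 : q = a1 ∨ q = a2
      · exact absurd (key q hpq hq2) (by simp)
      · rw [if_neg hq2]; exact Commute.one_right _
    · subst hq
      simp only [hfdef, if_pos rfl, if_neg hp]
      by_cases hp2 : p = a1 ∨ p = a2
      · exact absurd (key p hpq.symm hp2) (by simp)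
      · rw [if_neg hp2]; exact Commute.one_left _
    · simp only [hfdef, if_neg hp, if_neg hq]
      split_ifs <;>
        first
          | exact Commute.refl _
          | exact Commute.one_right _
          | exact Commute.one_left _
  set ρ := mkHom f hfcomm with hρ
  have hρy : ρ (gen G y) = heiT := by rw [hρ, mkHom_gen, hfdef]; simp
  have hρa1 : ρ (gen G a1) = heiL := by
    rw [hρ, mkHom_gen, hfdef]
    simp [ha1y]
  have hρa2 : ρ (gen G a2) = heiL := by
    rw [hρ, mkHom_gen, hfdef]
    simp [ha2y]
  have hval : ∀ h ∈ Subgroup.closure (gen G '' {v | v ∈ y :: s'}),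
      ρ h = heiT ^ (Multiplicative.toAdd (pHom h) y) := by
    intro h hh
    induction hh using Subgroup.closure_induction with
    | mem z hz =>
        obtain ⟨v, hv, rfl⟩ := hz
        rw [hρ, mkHom_gen, pHom_gen]
        by_cases hvy : v = y
        · subst hvy
          rw [Finsupp.single_eq_same, hfdef]
          simp
        · rw [Finsupp.single_apply, if_neg hvy, hfdef]
          have hv1 : v ≠ a1 := fun h => (hY1.2.1 (h ▸ ha1Y)) (hst v hv)
          have hv2 : v ≠ a2 := fun h => (hY2.2.1 (h ▸ ha2Y)) (hst v hv)
          simp only [if_neg hvy]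
          rw [if_neg (by tauto)]
          simp
    | one => simp
    | mul z1 z2 hz1 hz2 ih1 ih2 =>
        rw [map_mul, ih1, ih2, map_mul, toAdd_mul, Finsupp.add_apply, zpow_add]
    | inv z hz ih =>
        rw [map_inv, ih, map_inv, toAdd_inv, Finsupp.neg_apply, zpow_neg]
  have hρw : ρ w = heiT ^ c := by
    rw [hval w hwcl, hwp, Finsupp.single_eq_same]
  -- the three equations
  have e3 : ρ g * heiT = heiT * ρ g := by
    have h := (hconj (gen G y)).symm.trans (hWz y hyY1)
    have h' := congrArg ρ h
    rw [map_mul, map_mul, map_inv, hρy] at h'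
    exact mul_inv_eq_iff_eq_mul.1 h'
  have e2 : ρ g * heiL = heiL * ρ g := by
    have h := (hconj (gen G a2)).symm.trans (hWz a2 ha2Y1)
    have h' := congrArg ρ h
    rw [map_mul, map_mul, map_inv, hρa2] at h'
    exact mul_inv_eq_iff_eq_mul.1 h'
  have e1 : ρ g * heiL * (ρ g)⁻¹ = heiT ^ c * heiL * (heiT ^ c)⁻¹ := by
    have h := (hconj (gen G a1)).symm.trans (hWv a1 ha1Y)
    have h' := congrArg ρ h
    rw [map_mul, map_mul, map_inv, map_mul, map_mul, map_inv, hρa1, hρw] at h'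
    exact h'
  exact hc0 (hei_contra e3 e2 e1)

end RD
end RDCase2W
/-- If `Γ` has no domination-equivalent pair and no separating
intersection of links, then every finite-index nilpotent subgroup of `Out(A_Γ)` has
nilpotency class at least `depth(Γ)`. -/
theorem nilpotencyClass_ge_depth [Fintype V] (G : SimpleGraph V)
    (h1 : ¬ DomEquivPair G) (h2 : ¬ SepIntLinks G) :
    ∀ (K : Subgroup (OutG G)) (hn : Group.IsNilpotent ↥K), K.FiniteIndex →
      gdepth G ≤ Group.nilpotencyClass ↥K := by
  classical
  intro K hn hfi
  by_cases hd0 : gdepth G = 0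
  · rw [hd0]; exact Nat.zero_le _
  have hd1 : 1 ≤ gdepth G := Nat.one_le_iff_ne_zero.2 hd0
  obtain ⟨x, hx⟩ := RD.gdepth_exists G hd1
  have hm : ∀ φ : MulAut (RAAG G),
      ∃ m : ℕ, 0 < m ∧ (QuotientGroup.mk' (Inn (RAAG G)) φ) ^ m ∈ K :=
    fun φ => RD.exists_pow_mem K hfi _
  rcases le_or_gt (ssDepth G x) (domDepth G x) with hcase | hcase
  · have hdd : domDepth G x = gdepth G := by
      rw [hx, vdepth, max_eq_left hcase]
    obtain ⟨l, hl, -, hlen⟩ := RD.domDepth_exists G x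
    exact RD.case1 K hn hm l hl (by rw [hlen, hdd]) hd1
  · have hss : ssDepth G x = gdepth G := by
      rw [hx, vdepth, max_eq_right hcase.le]
    obtain ⟨l, x1, hl, hlen⟩ := RD.ssDepth_exists G x (by omega)
    exact RD.case2 h2 K hn hm l x x1 hl (by rw [hlen, hss]) hd1
end

section
/- If the finite simplicial graph Γ is disconnected (and has at least two vertices), then Γ contains a domination-equivalent pair of vertices or a separating intersection of links. -/
open SimpleGraph
open scoped commutatorElement

variable {V : Type*}

/-- If `Γ` is disconnected (it has two vertices not joined by any
path), then `Γ` contains a domination-equivalent pair of vertices or a separating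
intersection of links. -/
theorem domEquiv_or_sepIntLinks_of_disconnected [Fintype V] (G : SimpleGraph V)
    (h : ∃ u v : V, ¬ G.Reachable u v) :
    DomEquivPair G ∨ SepIntLinks G := by
  classical
  by_cases hsep : ∃ a b : V, a ≠ b ∧ ¬ G.Adj a b ∧ G.Reachable a b
  · obtain ⟨a, b, hab, hnadj, hreach⟩ := hsep
    obtain ⟨u, v, huv⟩ := h
    -- pick z among u, v not reachable to a
    have hz : ∃ z : V, ¬ G.Reachable z a := by
      by_cases hu : G.Reachable u a
      · exact ⟨v, fun hv => huv (hu.trans hv.symm)⟩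
      · exact ⟨u, hu⟩
    obtain ⟨z, hza⟩ := hz
    have hzb : ¬ G.Reachable z b := fun hzb => hza (hzb.trans hreach.symm)
    right
    refine ⟨a, b, hab, hnadj, z, ?_, ?_⟩
    · have hzS : z ∈ (lk G a ∩ lk G b)ᶜ := by
        intro hzmem
        exact hza ((G.adj_symm hzmem.1).reachable)
      have haS : a ∈ (lk G a ∩ lk G b)ᶜ := by
        intro hamem
        exact G.loopless.irrefl a hamem.1
      refine ⟨hzS, haS, fun hr => ?_⟩
      exact hza (hr.map (SimpleGraph.Embedding.induce _).toHom)
    · have hzS : z ∈ (lk G a ∩ lk G b)ᶜ := by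
        intro hzmem
        exact hza ((G.adj_symm hzmem.1).reachable)
      have hbS : b ∈ (lk G a ∩ lk G b)ᶜ := by
        intro hbmem
        exact G.loopless.irrefl b hbmem.2
      refine ⟨hzS, hbS, fun hr => ?_⟩
      exact hzb (hr.map (SimpleGraph.Embedding.induce _).toHom)
  · push_neg at hsep
    left
    by_cases hE : ∃ x y : V, G.Adj x y
    · obtain ⟨x, y, hxy⟩ := hE
      have clique : ∀ a b : V, a ≠ b → G.Reachable a b → G.Adj a b := by
        intro a b hne hr
        by_contra hadj
        exact hsep a b hne hadj hr
      have dom : ∀ a b : V, G.Adj a b → Dominates G a b := by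
        intro a b hab w hw
        have hwb : G.Adj b w := hw
        by_cases hwa : w = a
        · exact Or.inl hwa
        · refine Or.inr ?_
          have : G.Reachable a w := hab.reachable.trans hwb.reachable
          exact clique a w (Ne.symm hwa) this
      exact ⟨x, y, hxy.ne, dom x y hxy, dom y x hxy.symm⟩
    · push_neg at hE
      obtain ⟨u, v, huv⟩ := h
      have hne : u ≠ v := fun e => huv (e ▸ SimpleGraph.Reachable.refl u)
      refine ⟨u, v, hne, ?_, ?_⟩
      · intro w hw; exact absurd hw (hE v w)
      · intro w hw; exact absurd hw (hE u w)
end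

section
/- If the finite simplicial graph Γ is connected and contains a vertex z such that the induced subgraph on the complement of {z} has at least three connected components, then Γ contains a separating intersection of links. -/
open SimpleGraph

variable {V : Type*}

open scoped commutatorElement

lemma isCompOf_eq_of_mem (G : SimpleGraph V) {S Y1 Y2 : Set V}
    (h1 : IsCompOf G S Y1) (h2 : IsCompOf G S Y2) {a : V}
    (ha1 : a ∈ Y1) (ha2 : a ∈ Y2) : Y1 = Y2 := by
  have haS : a ∈ S := h1.2.1 ha1
  ext b
  constructor
  · intro hb
    have hbS : b ∈ S := h1.2.1 hb
    have hr : (G.induce S).Reachable ⟨a, haS⟩ ⟨b, hbS⟩ :=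
      (h1.2.2 ⟨a, haS⟩ ha1 ⟨b, hbS⟩).mpr hb
    exact (h2.2.2 ⟨a, haS⟩ ha2 ⟨b, hbS⟩).mp hr
  · intro hb
    have hbS : b ∈ S := h2.2.1 hb
    have hr : (G.induce S).Reachable ⟨a, haS⟩ ⟨b, hbS⟩ :=
      (h2.2.2 ⟨a, haS⟩ ha2 ⟨b, hbS⟩).mpr hb
    exact (h1.2.2 ⟨a, haS⟩ ha1 ⟨b, hbS⟩).mp hr

lemma exists_nbr_reachable (G : SimpleGraph V) (z : V) :
    ∀ {y t : V} (_ : G.Walk y t) (_ : t = z) (hy : y ∈ ({z} : Set V)ᶜ),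
      ∃ (x : V) (hx : x ∈ ({z} : Set V)ᶜ), G.Adj z x ∧
        (G.induce ({z} : Set V)ᶜ).Reachable ⟨y, hy⟩ ⟨x, hx⟩ := by
  intro y t w
  induction w with
  | nil => intro ht hy; exact absurd ht hy
  | @cons y v _ hadj p ih =>
    intro ht hy
    by_cases hv : v = z
    · subst hv
      exact ⟨y, hy, hadj.symm, Reachable.refl _⟩
    · have hv' : v ∈ ({z} : Set V)ᶜ := hv
      obtain ⟨x, hx, hzx, hr⟩ := ih ht hv'
      have hedge : (G.induce ({z} : Set V)ᶜ).Adj ⟨y, hy⟩ ⟨v, hv'⟩ := hadj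
      exact ⟨x, hx, hzx, hedge.reachable.trans hr⟩

lemma exists_nbr_in_comp (G : SimpleGraph V) (hc : G.Connected) {z : V} {Y : Set V}
    (hY : IsCompOf G (({z} : Set V)ᶜ) Y) : ∃ x ∈ Y, G.Adj z x := by
  obtain ⟨y, hy⟩ := hY.1
  have hyS : y ∈ ({z} : Set V)ᶜ := hY.2.1 hy
  obtain ⟨w⟩ := hc.1 y z
  obtain ⟨x, hx, hzx, hr⟩ := exists_nbr_reachable G z w rfl hyS
  exact ⟨x, (hY.2.2 ⟨y, hyS⟩ hy ⟨x, hx⟩).mp hr, hzx⟩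

/-- If `Γ` is connected and contains a vertex `z` such that the induced
subgraph on the complement of `{z}` has at least three connected components, then `Γ`
contains a separating intersection of links. -/
theorem sepIntLinks_of_cut_vertex [Fintype V] (G : SimpleGraph V)
    (hc : G.Connected)
    (h : ∃ z : V, ∃ Y1 Y2 Y3 : Set V,
        IsCompOf G (({z} : Set V)ᶜ) Y1 ∧ IsCompOf G (({z} : Set V)ᶜ) Y2 ∧
        IsCompOf G (({z} : Set V)ᶜ) Y3 ∧ Y1 ≠ Y2 ∧ Y1 ≠ Y3 ∧ Y2 ≠ Y3) :
    SepIntLinks G := by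
  obtain ⟨z, Y1, Y2, Y3, h1, h2, h3, h12, h13, h23⟩ := h
  obtain ⟨x, hx1, hzx⟩ := exists_nbr_in_comp G hc h1
  obtain ⟨y, hy2, hzy⟩ := exists_nbr_in_comp G hc h2
  obtain ⟨w, hw3, _⟩ := exists_nbr_in_comp G hc h3
  have hxS : x ∈ ({z} : Set V)ᶜ := h1.2.1 hx1
  have hyS : y ∈ ({z} : Set V)ᶜ := h2.2.1 hy2
  have hwS : w ∈ ({z} : Set V)ᶜ := h3.2.1 hw3
  -- x and y lie in distinct components, hence distinct and non-adjacent
  have hxy_not : ∀ u : V, u ∈ Y1 → u ∈ Y2 → False := fun u hu1 hu2 =>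
    h12 (isCompOf_eq_of_mem G h1 h2 hu1 hu2)
  have hxy : x ≠ y := fun hxy => hxy_not x hx1 (hxy ▸ hy2)
  have hnadj : ¬ G.Adj x y := by
    intro hadj
    have hedge : (G.induce ({z} : Set V)ᶜ).Adj ⟨x, hxS⟩ ⟨y, hyS⟩ := hadj
    exact hxy_not y ((h1.2.2 ⟨x, hxS⟩ hx1 ⟨y, hyS⟩).mp hedge.reachable) hy2
  -- the intersection of links is exactly {z}
  have hlk : lk G x ∩ lk G y = ({z} : Set V) := by
    ext u
    constructor
    · rintro ⟨hux, huy⟩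
      by_contra hu
      have huS : u ∈ ({z} : Set V)ᶜ := hu
      have e1 : (G.induce ({z} : Set V)ᶜ).Adj ⟨x, hxS⟩ ⟨u, huS⟩ := hux
      have e2 : (G.induce ({z} : Set V)ᶜ).Adj ⟨u, huS⟩ ⟨y, hyS⟩ := G.adj_symm (show G.Adj y u from huy)
      have hr : (G.induce ({z} : Set V)ᶜ).Reachable ⟨x, hxS⟩ ⟨y, hyS⟩ :=
        e1.reachable.trans e2.reachable
      exact hxy_not y ((h1.2.2 ⟨x, hxS⟩ hx1 ⟨y, hyS⟩).mp hr) hy2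
    · rintro rfl
      exact ⟨hzx.symm, hzy.symm⟩
  refine ⟨x, y, hxy, hnadj, w, ?_, ?_⟩
  · rw [SeparatesFrom, hlk]
    refine ⟨hwS, hxS, fun hr => ?_⟩
    exact h13 (isCompOf_eq_of_mem G h1 h3
      ((h1.2.2 ⟨x, hxS⟩ hx1 ⟨w, hwS⟩).mp hr.symm) hw3)
  · rw [SeparatesFrom, hlk]
    refine ⟨hwS, hyS, fun hr => ?_⟩
    exact h23 (isCompOf_eq_of_mem G h2 h3
      ((h2.2.2 ⟨y, hyS⟩ hy2 ⟨w, hwS⟩).mp hr.symm) hw3)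
end

section
/- Let G be the semidirect product ℤ² ⋊ ℤ in which a generator of ℤ acts on ℤ² by the matrix [[2,1],[1,1]]. Then G is solvable, and every finite-index subgroup of G is non-nilpotent; in particular G is not virtually nilpotent. -/
/-- The automorphism of `ℤ²` given by the matrix `[[2,1],[1,1]]`. -/
def matAut : (ℤ × ℤ) ≃+ (ℤ × ℤ) where
  toFun p := (2 * p.1 + p.2, p.1 + p.2)
  invFun p := (p.1 - p.2, -p.1 + 2 * p.2)
  left_inv := fun ⟨a, b⟩ => by
    simp only [Prod.mk.injEq]
    constructor <;> ring
  right_inv := fun ⟨a, b⟩ => by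
    simp only [Prod.mk.injEq]
    constructor <;> ring
  map_add' p q := by
    simp only [Prod.fst_add, Prod.snd_add, Prod.mk.injEq, Prod.mk_add_mk]
    constructor <;> ring

/-- The action of `ℤ` on `ℤ²` by powers of the matrix `[[2,1],[1,1]]`. -/
def φSol : Multiplicative ℤ →* MulAut (Multiplicative (ℤ × ℤ)) :=
  zpowersHom _ (AddEquiv.toMultiplicative matAut)

/-- The semidirect product `ℤ² ⋊ ℤ`, where a generator of `ℤ` acts on `ℤ²` by the
matrix `[[2,1],[1,1]]`. -/
abbrev Sol : Type := SemidirectProduct (Multiplicative (ℤ × ℤ)) (Multiplicative ℤ) φSol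

def eAut : MulAut (Multiplicative (ℤ × ℤ)) := AddEquiv.toMultiplicative matAut

noncomputable def Lf (x : Multiplicative (ℤ × ℤ)) : ℝ :=
  ((1 + Real.sqrt 5) / 2) * ((Multiplicative.toAdd x).1 : ℝ) + ((Multiplicative.toAdd x).2 : ℝ)

lemma toAdd_eAut (x : Multiplicative (ℤ × ℤ)) :
    Multiplicative.toAdd (eAut x) = matAut (Multiplicative.toAdd x) := rfl

lemma hs5 : Real.sqrt 5 * Real.sqrt 5 = 5 := Real.mul_self_sqrt (by norm_num)

lemma Lf_e (x : Multiplicative (ℤ × ℤ)) : Lf (eAut x) = (3 + Real.sqrt 5) / 2 * Lf x := by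
  unfold Lf
  rw [toAdd_eAut]
  show ((1 + Real.sqrt 5) / 2) * ((2 * (Multiplicative.toAdd x).1 + (Multiplicative.toAdd x).2 : ℤ) : ℝ) + (((Multiplicative.toAdd x).1 + (Multiplicative.toAdd x).2 : ℤ) : ℝ) = _
  push_cast
  linear_combination (-((Multiplicative.toAdd x).1 : ℝ) / 4) * hs5

lemma lam_pos : (0:ℝ) < (3 + Real.sqrt 5) / 2 := by positivity

lemma lam_ne_one : (3 + Real.sqrt 5) / 2 ≠ 1 := by
  have := Real.sqrt_nonneg 5
  intro h
  nlinarith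

lemma Lf_einv (x : Multiplicative (ℤ × ℤ)) :
    Lf (eAut⁻¹ x) = ((3 + Real.sqrt 5) / 2)⁻¹ * Lf x := by
  have h : eAut (eAut⁻¹ x) = x := by
    rw [MulAut.inv_def]; exact eAut.apply_symm_apply x
  have := Lf_e (eAut⁻¹ x)
  rw [h] at this
  field_simp [this]
  linarith [this]

lemma Lf_epow (m : ℤ) (x : Multiplicative (ℤ × ℤ)) :
    Lf ((eAut ^ m) x) = ((3 + Real.sqrt 5) / 2) ^ m * Lf x := by
  induction m using Int.induction_on generalizing x with
  | zero => simp
  | succ k ih =>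
      have h1 : (eAut ^ ((k : ℤ) + 1)) x = (eAut ^ (k : ℤ)) (eAut x) := by
        rw [zpow_add_one]; rfl
      rw [h1, ih, Lf_e, zpow_add_one₀ (ne_of_gt lam_pos)]
      ring
  | pred k ih =>
      have h1 : (eAut ^ (-(k : ℤ) - 1)) x = (eAut ^ (-(k : ℤ))) (eAut⁻¹ x) := by
        rw [zpow_sub_one]; rfl
      rw [h1, ih, Lf_einv, zpow_sub_one₀ (ne_of_gt lam_pos)]
      ring

lemma Lf_eq_zero_imp (x : Multiplicative (ℤ × ℤ)) (hL : Lf x = 0) : x = 1 := by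
  set a := (Multiplicative.toAdd x).1 with ha
  set b := (Multiplicative.toAdd x).2 with hb
  have hirr : Irrational (Real.sqrt 5) := by
    have := Nat.Prime.irrational_sqrt (p := 5) (by norm_num)
    simpa using this
  have ha0 : a = 0 := by
    by_contra h
    have h2 : Real.sqrt 5 = ((-2 * b - a : ℤ) : ℝ) / ((a : ℤ) : ℝ) := by
      have haR : ((a : ℤ) : ℝ) ≠ 0 := Int.cast_ne_zero.mpr h
      unfold Lf at hL
      field_simp
      push_cast
      linarith
    exact (irrational_iff_ne_rational _).mp hirr _ _ h h2
  have hb0 : b = 0 := by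
    unfold Lf at hL
    rw [← ha, ← hb] at hL
    rw [ha0] at hL
    simp at hL
    exact_mod_cast hL
  have : Multiplicative.toAdd x = 0 := Prod.ext ha0 hb0
  simpa using this

lemma fixfree (m : ℤ) (hm : m ≠ 0) (x : Multiplicative (ℤ × ℤ))
    (hx : (eAut ^ m) x = x) : x = 1 := by
  have h1 : ((3 + Real.sqrt 5) / 2) ^ m * Lf x = Lf x := by
    rw [← Lf_epow, hx]
  have hlam : ((3 + Real.sqrt 5) / 2) ^ m ≠ 1 := by
    intro h
    exact hm (zpow_right_injective₀ lam_pos lam_ne_one (by simpa using h))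
  have hL : Lf x = 0 := by
    by_contra h
    exact hlam (mul_right_cancel₀ h (by rw [h1, one_mul]))
  exact Lf_eq_zero_imp x hL

open SemidirectProduct
open scoped commutatorElement

lemma φSol_apply (m : Multiplicative ℤ) : φSol m = eAut ^ (Multiplicative.toAdd m) := rfl

lemma comm_inl_inr (v : Multiplicative (ℤ × ℤ)) (m : Multiplicative ℤ) :
    ⁅(inl v : Sol), (inr m : Sol)⁆ = inl (v * (φSol m v)⁻¹) := by
  have h : (inr m : Sol) * (inl v)⁻¹ * (inr m)⁻¹ = inl ((φSol m) v⁻¹) := by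
    rw [← map_inv, ← map_inv]
    exact (inl_aut (φ := φSol) m v⁻¹).symm
  rw [commutatorElement_def, mul_assoc, mul_assoc, ← mul_assoc (inr m : Sol), h,
    ← map_mul, map_inv]

-- subgroup of infinite group trick
lemma exists_ne_one_of_finiteIndex {G : Type*} [Group G] [Infinite G]
    (H : Subgroup G) (hH : H.FiniteIndex) : ∃ x ∈ H, x ≠ 1 := by
  by_contra h
  push_neg at h
  have hbot : H = ⊥ := (Subgroup.eq_bot_iff_forall H).mpr h
  have := hH.index_ne_zero
  rw [hbot, Subgroup.index_bot, Nat.card_eq_zero_of_infinite] at this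
  exact this rfl

theorem main (K : Subgroup Sol) (hK : K.FiniteIndex) (hnil : Group.IsNilpotent ↥K) : False := by
  haveI := hK
  -- get a nontrivial element of K of the form inr m
  obtain ⟨m, hmK, hm1⟩ : ∃ m : Multiplicative ℤ, (inr m : Sol) ∈ K ∧ m ≠ 1 := by
    set Z := (inr : Multiplicative ℤ →* Sol).range with hZ
    haveI : Infinite ↥Z := Infinite.of_injective
      (fun n : Multiplicative ℤ => (⟨inr n, ⟨n, rfl⟩⟩ : ↥Z))
      (fun a b hab => inr_injective (congrArg Subtype.val hab))
    obtain ⟨z, hzK, hz1⟩ := exists_ne_one_of_finiteIndex (K.subgroupOf Z) inferInstance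
    obtain ⟨n, hn⟩ := z.2
    refine ⟨n, ?_, ?_⟩
    · rw [hn]; exact (Subgroup.mem_subgroupOf).mp hzK
    · intro h
      apply hz1
      apply Subtype.ext
      rw [← hn, h, map_one]
      simp
  -- get a nontrivial element of K of the form inl v
  obtain ⟨v, hvK, hv1⟩ : ∃ v : Multiplicative (ℤ × ℤ), (inl v : Sol) ∈ K ∧ v ≠ 1 := by
    set Z := (inl : Multiplicative (ℤ × ℤ) →* Sol).range with hZ
    haveI : Infinite ↥Z := Infinite.of_injective
      (fun n : Multiplicative (ℤ × ℤ) => (⟨inl n, ⟨n, rfl⟩⟩ : ↥Z))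
      (fun a b hab => inl_injective (congrArg Subtype.val hab))
    obtain ⟨z, hzK, hz1⟩ := exists_ne_one_of_finiteIndex (K.subgroupOf Z) inferInstance
    obtain ⟨n, hn⟩ := z.2
    refine ⟨n, ?_, ?_⟩
    · rw [hn]; exact (Subgroup.mem_subgroupOf).mp hzK
    · intro h
      apply hz1
      apply Subtype.ext
      rw [← hn, h, map_one]
      simp
  have hm0 : Multiplicative.toAdd m ≠ 0 := fun h => hm1 (by simpa using h)
  set t : ↥K := ⟨inr m, hmK⟩ with ht
  let c : ℕ → ↥K := fun k => Nat.rec (⟨inl v, hvK⟩ : ↥K) (fun _ x => ⁅x, t⁆) k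
  have hc0 : c 0 = ⟨inl v, hvK⟩ := rfl
  have hcs : ∀ k, c (k + 1) = ⁅c k, t⁆ := fun k => rfl
  -- each c k lies in the lower central series
  have hmem : ∀ k, c k ∈ (⊤ : Subgroup ↥K).lowerCentralSeries k := by
    intro k
    induction k with
    | zero => exact Subgroup.mem_top _
    | succ n ih =>
        rw [hcs]
        exact Subgroup.commutator_mem_commutator ih (Subgroup.mem_top t)
  -- each c k is inl of a nontrivial element
  have hform : ∀ k, ∃ w : Multiplicative (ℤ × ℤ), ((c k).1 : Sol) = inl w ∧ w ≠ 1 := by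
    intro k
    induction k with
    | zero => exact ⟨v, rfl, hv1⟩
    | succ n ih =>
        obtain ⟨w, hw, hw1⟩ := ih
        refine ⟨w * (φSol m w)⁻¹, ?_, ?_⟩
        · have h2 : (c (n+1)).1 = ⁅(c n).1, t.1⁆ := rfl
          rw [h2, hw, comm_inl_inr]
        · intro h
          have hfix : (φSol m) w = w := by
            have := mul_eq_one_iff_eq_inv.mp h
            rw [inv_inv] at this
            exact this.symm
          rw [φSol_apply] at hfix
          exact hw1 (fixfree _ hm0 _ hfix)
  obtain ⟨N, hN⟩ := nilpotent_iff_lowerCentralSeries.mp hnil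
  have h1 : c N = 1 := by
    have := hmem N
    rw [hN] at this
    simpa using this
  obtain ⟨w, hw, hw1⟩ := hform N
  rw [h1] at hw
  exact hw1 (inl_injective (by simpa using hw.symm))

/-- The group `ℤ² ⋊ ℤ` with the action of `[[2,1],[1,1]]` is solvable,
every finite-index subgroup of it is non-nilpotent, and in particular it is not
virtually nilpotent. -/
theorem sol_solvable_not_virtNilpotent :
    IsSolvable Sol ∧ (∀ K : Subgroup Sol, K.FiniteIndex → ¬ Group.IsNilpotent ↥K) ∧
      ¬ ∃ K : Subgroup Sol, K.FiniteIndex ∧ Group.IsNilpotent ↥K := by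
  have hsolv : IsSolvable Sol :=
    solvable_of_ker_le_range SemidirectProduct.inl SemidirectProduct.rightHom
      (le_of_eq SemidirectProduct.range_inl_eq_ker_rightHom.symm)
  refine ⟨hsolv, fun K hK hnil => main K hK hnil, ?_⟩
  rintro ⟨K, hK, hnil⟩
  exact main K hK hnil
end
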